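/- arXiv:1702.00605 — 3 statements merged into one kernel-verified Lean document; each statement's English description precedes it below -/
import Mathlib

section
/- Let α = (αₙ) be any sequence of complex numbers and let Ω_α be the sesquilinear form on D(Ω_α) = {(ξₙ) ∈ ℓ² : Σ|αₙ||ξₙ|² < ∞} defined by Ω_α((ξₙ),(ηₙ)) = Σ αₙ ξₙ conj(ηₙ). Then the operator associated to Ω_α is the multiplication operator M_α with domain D(M_α) = {(ξₙ) ∈ ℓ² : Σ|αₙ|²|ξₙ|² < ∞}, M_α(ξₙ) = (αₙξₙ). -/
noncomputable section

open Filter Topology Function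
open scoped InnerProductSpace

namespace Paper

variable {V : Type} [AddCommGroup V] [Module ℂ V]

/-- `n` is a norm on the complex vector space `V`. -/
def IsNormFn (n : V → ℝ) : Prop :=
  (∀ x : V, n x = 0 ↔ x = 0) ∧
    (∀ (c : ℂ) (x : V), n (c • x) = ‖c‖ * n x) ∧
      ∀ x y : V, n (x + y) ≤ n x + n y

/-- `ξ` is a Cauchy sequence with respect to the norm `n`. -/
def IsCauchyWrt (n : V → ℝ) (ξ : ℕ → V) : Prop :=
  ∀ ε : ℝ, 0 < ε → ∃ N : ℕ, ∀ p q : ℕ, N ≤ p → N ≤ q → n (ξ p - ξ q) < ε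

/-- `ξ` tends to `x` with respect to the norm `n`. -/
def TendstoWrt (n : V → ℝ) (ξ : ℕ → V) (x : V) : Prop :=
  Tendsto (fun k => n (ξ k - x)) atTop (𝓝 0)

/-- `V` is complete with respect to the norm `n`. -/
def CompleteWrt (n : V → ℝ) : Prop :=
  ∀ ξ : ℕ → V, IsCauchyWrt n ξ → ∃ x : V, TendstoWrt n ξ x

/-- The two norms `n₁` and `n₂` are equivalent. -/
def EquivNorms (n₁ n₂ : V → ℝ) : Prop :=
  ∃ c₁ : ℝ, 0 < c₁ ∧ ∃ c₂ : ℝ, 0 < c₂ ∧ ∀ x : V, n₁ x ≤ c₁ * n₂ x ∧ n₂ x ≤ c₂ * n₁ x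

/-- `Ω` is a sesquilinear form: linear in the first entry, conjugate-linear in the second. -/
def IsSesq (Ω : V → V → ℂ) : Prop :=
  (∀ η : V, IsLinearMap ℂ fun ξ => Ω ξ η) ∧
    ∀ ξ : V, IsLinearMap ℂ fun η => (starRingEnd ℂ) (Ω ξ η)

/-- `T` is a positive form: `T(ξ,ξ) ≥ 0` for every `ξ`. -/
def IsPositiveForm (T : V → V → ℂ) : Prop :=
  ∀ x : V, (T x x).im = 0 ∧ 0 ≤ (T x x).re

/-- The norm `n` is compatible with the positive sesquilinear form `T`. -/
def CompatibleWithForm (T : V → V → ℂ) (n : V → ℝ) : Prop :=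
  (∃ α : ℝ, 0 < α ∧ ∀ ξ : V, (T ξ ξ).re ≤ α * n ξ ^ 2) ∧
    ∀ ξ : ℕ → V, Tendsto (fun k => (T (ξ k) (ξ k)).re) atTop (𝓝 0) →
      IsCauchyWrt n ξ → Tendsto (fun k => n (ξ k)) atTop (𝓝 0)

/-- A realization of `(V, n)` as a dense subspace of a reflexive Banach space `E`. -/
structure BanachModel (V : Type) [AddCommGroup V] [Module ℂ V] (n : V → ℝ) : Type 1 where
  E : Type
  [instGroup : NormedAddCommGroup E]
  [instSpace : NormedSpace ℂ E]
  [instComplete : CompleteSpace E]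
  j : V →ₗ[ℂ] E
  isometry : ∀ x : V, ‖j x‖ = n x
  dense : DenseRange j
  reflexive : Surjective (NormedSpace.inclusionInDoubleDual ℂ E)

/-- `V` endowed with the norm `n` is a reflexive Banach space. -/
def IsReflexiveBanachWrt (n : V → ℝ) : Prop :=
  ∃ M : BanachModel V n, Surjective M.j

/-- The completion of `V` with respect to the norm `n` is a reflexive Banach space. -/
def CompletionIsReflexiveBanach (n : V → ℝ) : Prop :=
  Nonempty (BanachModel V n)

variable {H : Type} [NormedAddCommGroup H] [InnerProductSpace ℂ H]

/-- The embedding of `D[n]` into `H` is continuous. -/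
def EmbedsContinuously (D : Submodule ℂ H) (n : D → ℝ) : Prop :=
  ∃ α : ℝ, 0 < α ∧ ∀ ξ : D, ‖(ξ : H)‖ ≤ α * n ξ

/-- The norm `n` on `D` is compatible with the inner product of `H`. -/
def CompatibleWithInner (D : Submodule ℂ H) (n : D → ℝ) : Prop :=
  EmbedsContinuously D n ∧
    ∀ ξ : ℕ → D, Tendsto (fun k => ‖(ξ k : H)‖) atTop (𝓝 0) →
      IsCauchyWrt n ξ → Tendsto (fun k => n (ξ k)) atTop (𝓝 0)

/-- The form `Ω` is bounded on `D[n]`. -/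
def BoundedOn (D : Submodule ℂ H) (Ω : D → D → ℂ) (n : D → ℝ) : Prop :=
  ∃ β : ℝ, 0 < β ∧ ∀ ξ η : D, ‖Ω ξ η‖ ≤ β * n ξ * n η

/-- `Ω` is q-closed with respect to the norm `n` (Definition 5.2 of Di Bella–Trapani). -/
def IsQClosed (D : Submodule ℂ H) (Ω : D → D → ℂ) (n : D → ℝ) : Prop :=
  IsNormFn n ∧ CompatibleWithInner D n ∧ IsReflexiveBanachWrt n ∧ BoundedOn D Ω n

/-- `Ω` is q-closable with respect to the norm `n`. -/
def IsQClosable (D : Submodule ℂ H) (Ω : D → D → ℂ) (n : D → ℝ) : Prop :=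
  IsNormFn n ∧ CompatibleWithInner D n ∧ CompletionIsReflexiveBanach n ∧ BoundedOn D Ω n

/-- `Λ` is a bounded conjugate-linear functional on `D[n]`,
i.e. an element of the conjugate dual of `D[n]`. -/
def MemConjDual (D : Submodule ℂ H) (n : D → ℝ) (Λ : D → ℂ) : Prop :=
  (∀ x y : D, Λ (x + y) = Λ x + Λ y) ∧
    (∀ (c : ℂ) (x : D), Λ (c • x) = (starRingEnd ℂ) c * Λ x) ∧
      ∃ C : ℝ, ∀ x : D, ‖Λ x‖ ≤ C * n x

/-- `Υ` is a bounded sesquilinear form on `H`. -/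
def IsBoundedForm (Υ : H → H → ℂ) : Prop :=
  IsSesq Υ ∧ ∃ C : ℝ, ∀ x y : H, ‖Υ x y‖ ≤ C * ‖x‖ * ‖y‖

/-- `Υ ∈ P₀(Ω)`: `N(Ω+Υ) = {0}` and every element of the conjugate dual of `D[n]`
is represented by `Ω+Υ`. -/
def InP0 (D : Submodule ℂ H) (Ω : D → D → ℂ) (n : D → ℝ) (Υ : H → H → ℂ) : Prop :=
  (∀ ξ : D, (∀ η : D, Ω ξ η + Υ ↑ξ ↑η = 0) → ξ = 0) ∧
    ∀ Λ : D → ℂ, MemConjDual D n Λ → ∃ ξ : D, ∀ η : D, Λ η = Ω ξ η + Υ ↑ξ ↑η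

/-- `Ω` is solvable with respect to the norm `n`. -/
def IsSolvable (D : Submodule ℂ H) (Ω : D → D → ℂ) (n : D → ℝ) : Prop :=
  IsQClosed D Ω n ∧ ∃ Υ : H → H → ℂ, IsBoundedForm Υ ∧ InP0 D Ω n Υ

/-- The numerical range of a form on `D`. -/
def NumRangeForm (D : Submodule ℂ H) (Ω : D → D → ℂ) : Set ℂ :=
  {z : ℂ | ∃ ξ : D, ‖(ξ : H)‖ = 1 ∧ z = Ω ξ ξ}

/-- The numerical range of a form on `H`. -/
def NumRangeFormH (Υ : H → H → ℂ) : Set ℂ :=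
  {z : ℂ | ∃ x : H, ‖x‖ = 1 ∧ z = Υ x x}

/-- `sup { |Θ(ξ,η)| : ‖η‖_Ω = 1 }`. -/
def FormSup (D : Submodule ℂ H) (Θ : D → D → ℂ) (n : D → ℝ) (ξ : D) : ℝ :=
  sSup {r : ℝ | ∃ η : D, n η = 1 ∧ r = ‖Θ ξ η‖}

end Paper

namespace Paper

instance : Fact ((1 : ENNReal) ≤ 2) := ⟨one_le_two⟩

private lemma summable_sq (f : lp (fun _ : ℕ => ℂ) 2) :
    Summable fun k => ‖f k‖ ^ 2 := by
  have h := (lp.memℓp f).summable (by norm_num : 0 < (2 : ENNReal).toReal)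
  have : (2 : ENNReal).toReal = ((2:ℕ):ℝ) := by norm_num
  rw [this] at h
  simpa [Real.rpow_natCast] using h

private lemma single_summable (α : ℕ → ℂ) (k : ℕ) :
    Summable fun j => ‖α j‖ * ‖(lp.single 2 k (1:ℂ) : lp (fun _ : ℕ => ℂ) 2) j‖ ^ 2 := by
  apply summable_of_ne_finset_zero (s := {k})
  intro j hj
  rw [lp.single_apply_ne _ _ _ (by simpa using hj)]
  simp

private lemma tsum_single (α : ℕ → ℂ) (ξ : lp (fun _ : ℕ => ℂ) 2) (k : ℕ) :
    (∑' j, α j * ξ j * (starRingEnd ℂ) ((lp.single 2 k (1:ℂ) : lp (fun _ : ℕ => ℂ) 2) j))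
      = α k * ξ k := by
  rw [tsum_eq_single k]
  · rw [lp.single_apply_self]; simp
  · intro j hj
    rw [lp.single_apply_ne _ _ _ hj]
    simp
private lemma T_pointwise (α : ℕ → ℂ)
    (DT : Set (lp (fun _ : ℕ => ℂ) 2)) (T : lp (fun _ : ℕ => ℂ) 2 → lp (fun _ : ℕ => ℂ) 2)
    (hrep : ∀ ξ ∈ DT, ∀ η : lp (fun _ : ℕ => ℂ) 2,
      (Summable fun k => ‖α k‖ * ‖η k‖ ^ 2) →
        (∑' k, α k * ξ k * (starRingEnd ℂ) (η k)) = ⟪η, T ξ⟫_ℂ)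
    {ξ : lp (fun _ : ℕ => ℂ) 2} (hξ : ξ ∈ DT) (k : ℕ) : T ξ k = α k * ξ k := by
  have h := hrep ξ hξ (lp.single 2 k 1) (single_summable α k)
  rw [tsum_single, lp.inner_single_left] at h
  simpa [RCLike.inner_apply] using h.symm


theorem associated_operator_of_l2_multiplication_form (α : ℕ → ℂ) (lam : ℂ)
    (hlam : lam ∉ closure (Set.range α))
    (DT : Set (lp (fun _ : ℕ => ℂ) 2)) (T : lp (fun _ : ℕ => ℂ) 2 → lp (fun _ : ℕ => ℂ) 2)
    (hdom : ∀ ξ ∈ DT, Summable fun k => ‖α k‖ * ‖ξ k‖ ^ 2)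
    (hrep : ∀ ξ ∈ DT, ∀ η : lp (fun _ : ℕ => ℂ) 2,
      (Summable fun k => ‖α k‖ * ‖η k‖ ^ 2) →
        (∑' k, α k * ξ k * (starRingEnd ℂ) (η k)) = ⟪η, T ξ⟫_ℂ)
    (hsurj : ∀ χ : lp (fun _ : ℕ => ℂ) 2, ∃ ξ ∈ DT, T ξ - lam • ξ = χ) :
    DT = {ξ : lp (fun _ : ℕ => ℂ) 2 | Summable fun k => ‖α k‖ ^ 2 * ‖ξ k‖ ^ 2} ∧
      ∀ ξ ∈ DT, ∀ k : ℕ, T ξ k = α k * ξ k := by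
  have hT : ∀ ξ ∈ DT, ∀ k : ℕ, T ξ k = α k * ξ k := fun ξ hξ k => T_pointwise α DT T hrep hξ k
  refine ⟨Set.Subset.antisymm ?_ ?_, hT⟩
  · intro ξ hξ
    have h := summable_sq (T ξ)
    have : ∀ k, ‖T ξ k‖ ^ 2 = ‖α k‖ ^ 2 * ‖ξ k‖ ^ 2 := by
      intro k; rw [hT ξ hξ k, norm_mul, mul_pow]
    simpa only [this, Set.mem_setOf_eq] using h
  · intro ξ hξ
    simp only [Set.mem_setOf_eq] at hξ
    -- distance bound
    obtain ⟨δ, hδ, hd⟩ : ∃ δ : ℝ, 0 < δ ∧ ∀ k, δ ≤ ‖lam - α k‖ := by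
      rw [Metric.mem_closure_iff] at hlam
      push_neg at hlam
      obtain ⟨δ, hδ, hd⟩ := hlam
      exact ⟨δ, hδ, fun k => by simpa [Complex.dist_eq] using hd (α k) ⟨k, rfl⟩⟩
    have hne : ∀ k, α k - lam ≠ 0 := by
      intro k h
      have := hd k
      rw [show lam - α k = -(α k - lam) by ring, h] at this
      simp at this
      linarith
    -- χ ∈ ℓ²
    have hg : Summable (fun k => 2 * (‖α k‖ ^ 2 * ‖ξ k‖ ^ 2) + 2 * ‖lam‖ ^ 2 * ‖ξ k‖ ^ 2) :=
      (hξ.mul_left 2).add ((summable_sq ξ).mul_left (2 * ‖lam‖ ^ 2))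
    have hs : Summable (fun k => ‖(α k - lam) * ξ k‖ ^ (2:ℕ)) := by
      apply Summable.of_nonneg_of_le (fun k => by positivity) _ hg
      intro k
      have h1 : ‖α k - lam‖ ≤ ‖α k‖ + ‖lam‖ := norm_sub_le _ _
      have h0 : (0:ℝ) ≤ ‖α k - lam‖ := norm_nonneg _
      have h3 := sq_nonneg (‖α k‖ - ‖lam‖)
      rw [norm_mul, mul_pow]
      have h4 : ‖α k - lam‖ ^ 2 ≤ 2 * ‖α k‖ ^ 2 + 2 * ‖lam‖ ^ 2 := by nlinarith
      calc ‖α k - lam‖ ^ 2 * ‖ξ k‖ ^ 2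
          ≤ (2 * ‖α k‖ ^ 2 + 2 * ‖lam‖ ^ 2) * ‖ξ k‖ ^ 2 :=
            mul_le_mul_of_nonneg_right h4 (sq_nonneg _)
        _ = 2 * (‖α k‖ ^ 2 * ‖ξ k‖ ^ 2) + 2 * ‖lam‖ ^ 2 * ‖ξ k‖ ^ 2 := by ring
    have hχmem : Memℓp (fun k => (α k - lam) * ξ k) 2 := by
      apply memℓp_gen
      have h2 : (2 : ENNReal).toReal = ((2:ℕ):ℝ) := by norm_num
      rw [h2]
      simpa only [Real.rpow_natCast] using hs
    obtain ⟨ζ, hζ, hTζ⟩ := hsurj ⟨fun k => (α k - lam) * ξ k, hχmem⟩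
    have hζξ : ζ = ξ := by
      apply lp.ext
      funext k
      have h1 : T ζ k - lam * ζ k = (α k - lam) * ξ k := by
        have := congrArg (fun f : lp (fun _ : ℕ => ℂ) 2 => (f : ∀ _ : ℕ, ℂ) k) hTζ
        exact this
      rw [hT ζ hζ k] at h1
      have h2 : (α k - lam) * ζ k = (α k - lam) * ξ k := by rw [← h1]; ring
      exact mul_left_cancel₀ (hne k) h2
    rwa [← hζξ]


end Paper
end
end

section
/- Let T be a closed densely defined operator on a Hilbert space H with domain D, and let Ω_T(ξ,η) = ⟨Tξ,η⟩ for ξ, η ∈ D, which is q-closed with respect to the graph norm ‖ξ‖_T = (‖ξ‖² + ‖Tξ‖²)^{1/2}. Then Ω_T is solvable with respect to ‖·‖_T if and only if D = H and T is bounded. -/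
noncomputable section

open Filter Topology Function
open scoped InnerProductSpace

namespace Paper


/-! ### Auxiliary lemmas -/

/-- Every Hilbert space is reflexive. -/
lemma hilbert_reflexive {E : Type} [NormedAddCommGroup E] [InnerProductSpace ℂ E]
    [CompleteSpace E] : Surjective (NormedSpace.inclusionInDoubleDual ℂ E) := by
  intro Λ
  set td := InnerProductSpace.toDual ℂ E with htd
  let g : E →ₗ[ℂ] ℂ :=
  { toFun := fun z => (starRingEnd ℂ) (Λ (td z))
    map_add' := by intro a b; simp
    map_smul' := by
      intro c z
      simp only [map_smulₛₗ, RingHom.id_apply]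
      simp [smul_eq_mul, mul_comm] }
  have hg : ∀ z, ‖g z‖ ≤ ‖Λ‖ * ‖z‖ := by
    intro z
    have : ‖g z‖ = ‖Λ (td z)‖ := by simp [g]
    rw [this]
    calc ‖Λ (td z)‖ ≤ ‖Λ‖ * ‖td z‖ := Λ.le_opNorm _
      _ = ‖Λ‖ * ‖z‖ := by rw [td.norm_map]
  let gc : E →L[ℂ] ℂ := g.mkContinuous ‖Λ‖ hg
  refine ⟨td.symm gc, ?_⟩
  ext f
  rw [NormedSpace.dual_def]
  have hf : f = td (td.symm f) := (td.apply_symm_apply f).symm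
  have h1 : f (td.symm gc) = ⟪td.symm f, td.symm gc⟫_ℂ := by
    conv_lhs => rw [hf]
    rw [htd, InnerProductSpace.toDual_apply_apply]
  have h2 : gc (td.symm f) = ⟪td.symm gc, td.symm f⟫_ℂ := by
    conv_lhs => rw [show gc = td (td.symm gc) from (td.apply_symm_apply gc).symm]
    rw [htd, InnerProductSpace.toDual_apply_apply]
  have h3 : gc (td.symm f) = (starRingEnd ℂ) (Λ f) := by
    have : gc (td.symm f) = (starRingEnd ℂ) (Λ (td (td.symm f))) := rfl
    rw [this, ← hf]
  rw [h1, ← inner_conj_symm, ← h2, h3]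
  simp

variable {H : Type} [NormedAddCommGroup H] [InnerProductSpace ℂ H]

/-- The embedding of `D` into `H ×₂ H` through the graph of `T`. -/
def graphMap (D : Submodule ℂ H) (T : ↥D →ₗ[ℂ] H) : ↥D →ₗ[ℂ] WithLp 2 (H × H) :=
  ((WithLp.linearEquiv 2 ℂ (H × H)).symm.toLinearMap).comp ((D.subtype).prod T)

lemma graphMap_norm (D : Submodule ℂ H) (T : ↥D →ₗ[ℂ] H) (ξ : ↥D) :
    ‖graphMap D T ξ‖ = Real.sqrt (‖(ξ : H)‖ ^ 2 + ‖T ξ‖ ^ 2) := by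
  rw [WithLp.prod_norm_eq_add (by norm_num)]
  rw [Real.sqrt_eq_rpow]
  norm_num
  rfl

lemma graphMap_inj (D : Submodule ℂ H) (T : ↥D →ₗ[ℂ] H) : Injective (graphMap D T) := by
  intro a b hab
  have : ((a : H), T a) = ((b : H), T b) := by simpa [graphMap] using hab
  exact Subtype.ext (congrArg Prod.fst this)

lemma graphMap_range_closed (D : Submodule ℂ H) (T : ↥D →ₗ[ℂ] H)
    (hclosed : IsClosed {p : H × H | ∃ ξ : ↥D, p.1 = (ξ : H) ∧ p.2 = T ξ}) :
    IsClosed ((LinearMap.range (graphMap D T) : Submodule ℂ (WithLp 2 (H × H))) :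
      Set (WithLp 2 (H × H))) := by
  have hc : Continuous (WithLp.prodContinuousLinearEquiv 2 ℂ H H) :=
    (WithLp.prodContinuousLinearEquiv 2 ℂ H H).continuous
  have hset : ((LinearMap.range (graphMap D T)) : Set (WithLp 2 (H × H))) =
      (WithLp.prodContinuousLinearEquiv 2 ℂ H H) ⁻¹'
        {p : H × H | ∃ ξ : ↥D, p.1 = (ξ : H) ∧ p.2 = T ξ} := by
    ext p
    simp only [SetLike.mem_coe, LinearMap.mem_range, Set.mem_preimage, Set.mem_setOf_eq]
    constructor
    · rintro ⟨ξ, rfl⟩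
      exact ⟨ξ, rfl, rfl⟩
    · rintro ⟨ξ, h1, h2⟩
      refine ⟨ξ, ?_⟩
      apply (WithLp.equiv 2 (H × H)).injective
      exact (Prod.ext h1 h2).symm
  rw [hset]
  exact hclosed.preimage hc

lemma coe_le_graphNorm (D : Submodule ℂ H) (T : ↥D →ₗ[ℂ] H) (ξ : ↥D) :
    ‖(ξ : H)‖ ≤ Real.sqrt (‖(ξ : H)‖ ^ 2 + ‖T ξ‖ ^ 2) := by
  nth_rewrite 1 [show ‖(ξ : H)‖ = Real.sqrt (‖(ξ : H)‖ ^ 2) by rw [Real.sqrt_sq (norm_nonneg _)]]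
  exact Real.sqrt_le_sqrt (le_add_of_nonneg_right (sq_nonneg _))

lemma T_le_graphNorm (D : Submodule ℂ H) (T : ↥D →ₗ[ℂ] H) (ξ : ↥D) :
    ‖T ξ‖ ≤ Real.sqrt (‖(ξ : H)‖ ^ 2 + ‖T ξ‖ ^ 2) := by
  nth_rewrite 1 [show ‖T ξ‖ = Real.sqrt (‖T ξ‖ ^ 2) by rw [Real.sqrt_sq (norm_nonneg _)]]
  exact Real.sqrt_le_sqrt (le_add_of_nonneg_left (sq_nonneg _))

lemma graph_isNormFn (D : Submodule ℂ H) (T : ↥D →ₗ[ℂ] H) :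
    IsNormFn (fun ξ : ↥D => Real.sqrt (‖(ξ : H)‖ ^ 2 + ‖T ξ‖ ^ 2)) := by
  have hnn : ∀ ξ : ↥D, Real.sqrt (‖(ξ : H)‖ ^ 2 + ‖T ξ‖ ^ 2) = ‖graphMap D T ξ‖ :=
    fun ξ => (graphMap_norm D T ξ).symm
  refine ⟨fun x => ?_, fun c x => ?_, fun x y => ?_⟩ <;> simp only []
  · simp only [hnn, norm_eq_zero]
    constructor
    · intro h
      exact graphMap_inj D T (h.trans (map_zero _).symm)
    · rintro rfl; exact map_zero _
  · show Real.sqrt _ = _ * Real.sqrt _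
    rw [hnn (c • x), hnn x, map_smul, norm_smul]
  · show Real.sqrt _ ≤ Real.sqrt _ + Real.sqrt _
    rw [hnn (x + y), hnn x, hnn y, map_add]
    exact norm_add_le _ _

lemma graph_reflexive (D : Submodule ℂ H) [CompleteSpace H] (T : ↥D →ₗ[ℂ] H)
    (hclosed : IsClosed {p : H × H | ∃ ξ : ↥D, p.1 = (ξ : H) ∧ p.2 = T ξ}) :
    IsReflexiveBanachWrt (fun ξ : ↥D => Real.sqrt (‖(ξ : H)‖ ^ 2 + ‖T ξ‖ ^ 2)) := by
  haveI : CompleteSpace ↥(LinearMap.range (graphMap D T)) :=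
    (graphMap_range_closed D T hclosed).completeSpace_coe
  exact ⟨{ E := ↥(LinearMap.range (graphMap D T)),
           j := (graphMap D T).rangeRestrict,
           isometry := fun x => graphMap_norm D T x,
           dense := (LinearMap.surjective_rangeRestrict _).denseRange,
           reflexive := hilbert_reflexive },
         LinearMap.surjective_rangeRestrict _⟩

/-- Two vectors with equal inner products against a dense submodule are equal. -/
lemma eq_of_inner_dense {D : Submodule ℂ H} (hD : Dense (D : Set H)) {u v : H}
    (h : ∀ η : ↥D, ⟪(η : H), u⟫_ℂ = ⟪(η : H), v⟫_ℂ) : u = v := by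
  have hfun : (fun x : H => ⟪x, u⟫_ℂ) = fun x : H => ⟪x, v⟫_ℂ := by
    apply Continuous.ext_on hD
    · exact Continuous.inner continuous_id continuous_const
    · exact Continuous.inner continuous_id continuous_const
    · rintro x hx
      exact h ⟨x, hx⟩
  have := congrFun hfun (u - v)
  have hz : ⟪u - v, u - v⟫_ℂ = 0 := by
    rw [inner_sub_right, this, sub_self]
  rw [sub_eq_zero.mp (inner_self_eq_zero.mp hz)]


theorem graph_form_solvable_iff_bounded {H : Type} [NormedAddCommGroup H]
    [InnerProductSpace ℂ H] [CompleteSpace H]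
    (D : Submodule ℂ H) (hD : Dense (D : Set H)) (T : ↥D →ₗ[ℂ] H)
    (hclosed : IsClosed {p : H × H | ∃ ξ : ↥D, p.1 = (ξ : H) ∧ p.2 = T ξ}) :
    IsSolvable D (fun ξ η => ⟪(η : H), T ξ⟫_ℂ)
        (fun ξ => Real.sqrt (‖(ξ : H)‖ ^ 2 + ‖T ξ‖ ^ 2)) ↔
      (D = (⊤ : Submodule ℂ H) ∧ ∃ C : ℝ, ∀ ξ : ↥D, ‖T ξ‖ ≤ C * ‖(ξ : H)‖) := by
  constructor
  · -- Solvable → everywhere defined and bounded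
    rintro ⟨⟨hnorm, hcompat, hrefl, hbdd⟩, Υ, ⟨⟨hs1, hs2⟩, C₀, hΥ⟩, hker, hrep⟩
    -- Step 1: represent Υ by an operator B
    have hBex : ∀ x : H, ∃ u : H, ∀ y : H, Υ x y = ⟪y, u⟫_ℂ := by
      intro x
      let f : H →ₗ[ℂ] ℂ :=
      { toFun := fun y => (starRingEnd ℂ) (Υ x y)
        map_add' := (hs2 x).map_add
        map_smul' := (hs2 x).map_smul }
      have hf : ∀ y, ‖f y‖ ≤ C₀ * ‖x‖ * ‖y‖ := by
        intro y
        have h1 : ‖f y‖ = ‖Υ x y‖ := RCLike.norm_conj _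
        rw [h1]
        exact hΥ x y
      refine ⟨(InnerProductSpace.toDual ℂ H).symm (f.mkContinuous (C₀ * ‖x‖) hf), fun y => ?_⟩
      have h2 : ⟪(InnerProductSpace.toDual ℂ H).symm (f.mkContinuous (C₀ * ‖x‖) hf), y⟫_ℂ
          = f y := InnerProductSpace.toDual_symm_apply
      rw [← inner_conj_symm, h2]
      show Υ x y = (starRingEnd ℂ) ((starRingEnd ℂ) (Υ x y))
      simp
    choose B hB using hBex
    have hsum : ∀ ξ η : ↥D, ⟪(η : H), T ξ⟫_ℂ + Υ (↑ξ) (↑η) = ⟪(η : H), T ξ + B ↑ξ⟫_ℂ := by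
      intro ξ η
      rw [inner_add_right, hB]
    -- Step 2: representation of basic conjugate-linear functionals
    have hrepr : ∀ v w : H, ∃ ξ : ↥D, ∀ η : ↥D,
        ⟪(η : H), v⟫_ℂ + ⟪T η, w⟫_ℂ = ⟪(η : H), T ξ + B ↑ξ⟫_ℂ := by
      intro v w
      have hmem : MemConjDual D (fun ξ : ↥D => Real.sqrt (‖(ξ : H)‖ ^ 2 + ‖T ξ‖ ^ 2))
          (fun η : ↥D => ⟪(η : H), v⟫_ℂ + ⟪T η, w⟫_ℂ) := by
        refine ⟨fun x y => ?_, fun c x => ?_, ‖v‖ + ‖w‖, fun x => ?_⟩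
        · show ⟪((x + y : ↥D) : H), v⟫_ℂ + ⟪T (x + y), w⟫_ℂ = _
          rw [Submodule.coe_add, map_add, inner_add_left, inner_add_left]
          ring
        · show ⟪((c • x : ↥D) : H), v⟫_ℂ + ⟪T (c • x), w⟫_ℂ = _
          rw [Submodule.coe_smul, map_smul, inner_smul_left, inner_smul_left]
          ring
        · calc ‖⟪(x : H), v⟫_ℂ + ⟪T x, w⟫_ℂ‖ ≤ ‖⟪(x : H), v⟫_ℂ‖ + ‖⟪T x, w⟫_ℂ‖ :=
                norm_add_le _ _
            _ ≤ ‖(x : H)‖ * ‖v‖ + ‖T x‖ * ‖w‖ :=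
                add_le_add (norm_inner_le_norm _ _) (norm_inner_le_norm _ _)
            _ ≤ Real.sqrt (‖(x : H)‖ ^ 2 + ‖T x‖ ^ 2) * ‖v‖
                + Real.sqrt (‖(x : H)‖ ^ 2 + ‖T x‖ ^ 2) * ‖w‖ :=
                add_le_add (mul_le_mul_of_nonneg_right (coe_le_graphNorm D T x) (norm_nonneg _))
                  (mul_le_mul_of_nonneg_right (T_le_graphNorm D T x) (norm_nonneg _))
            _ = (‖v‖ + ‖w‖) * Real.sqrt (‖(x : H)‖ ^ 2 + ‖T x‖ ^ 2) := by ring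
      obtain ⟨ξ, hξ⟩ := hrep _ hmem
      exact ⟨ξ, fun η => (hξ η).trans (hsum ξ η)⟩
    -- Step 3: the "adjoint-like" operator A, defined on all of H
    have hAex : ∀ w : H, ∃ u : H, ∀ η : ↥D, ⟪T η, w⟫_ℂ = ⟪(η : H), u⟫_ℂ := by
      intro w
      obtain ⟨ξ, hξ⟩ := hrepr 0 w
      refine ⟨T ξ + B ↑ξ, fun η => ?_⟩
      have := hξ η
      rwa [inner_zero_right, zero_add] at this
    choose A hA using hAex
    have hAadd : ∀ w w' : H, A (w + w') = A w + A w' := by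
      intro w w'
      apply eq_of_inner_dense hD
      intro η
      rw [← hA (w + w') η, inner_add_right, inner_add_right, hA w η, hA w' η]
    have hAsmul : ∀ (c : ℂ) (w : H), A (c • w) = c • A w := by
      intro c w
      apply eq_of_inner_dense hD
      intro η
      rw [← hA (c • w) η, inner_smul_right, inner_smul_right, hA w η]
    let Alin : H →ₗ[ℂ] H :=
    { toFun := A
      map_add' := hAadd
      map_smul' := hAsmul }
    have hgraph : (Alin.graph : Set (H × H)) =
        ⋂ η : ↥D, {p : H × H | ⟪T η, p.1⟫_ℂ = ⟪(η : H), p.2⟫_ℂ} := by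
      ext p
      simp only [Set.mem_iInter, Set.mem_setOf_eq, SetLike.mem_coe, LinearMap.mem_graph_iff]
      constructor
      · intro hp η
        rw [hp]
        exact hA p.1 η
      · intro hp
        apply eq_of_inner_dense hD
        intro η
        show ⟪(η : H), p.2⟫_ℂ = ⟪(η : H), A p.1⟫_ℂ
        rw [← hA p.1 η]
        exact (hp η).symm
    have hgc : IsClosed (Alin.graph : Set (H × H)) := by
      rw [hgraph]
      exact isClosed_iInter fun η => isClosed_eq
        (Continuous.inner continuous_const continuous_fst)
        (Continuous.inner continuous_const continuous_snd)
    have hAcont : Continuous Alin := Alin.continuous_of_isClosed_graph hgc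
    let Acl : H →L[ℂ] H := ⟨Alin, hAcont⟩
    -- Step 4: T is bounded
    have hTbdd : ∀ ξ : ↥D, ‖T ξ‖ ≤ ‖Acl‖ * ‖(ξ : H)‖ := by
      intro ξ
      have h1 : ⟪T ξ, T ξ⟫_ℂ = ⟪(ξ : H), A (T ξ)⟫_ℂ := hA (T ξ) ξ
      have h2 : ‖⟪T ξ, T ξ⟫_ℂ‖ = ‖T ξ‖ ^ 2 := by
        rw [inner_self_eq_norm_sq_to_K, norm_pow]
        simp
      have h3 : ‖T ξ‖ ^ 2 ≤ ‖(ξ : H)‖ * (‖Acl‖ * ‖T ξ‖) := by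
        calc ‖T ξ‖ ^ 2 = ‖⟪(ξ : H), A (T ξ)⟫_ℂ‖ := by rw [← h1, h2]
          _ ≤ ‖(ξ : H)‖ * ‖A (T ξ)‖ := norm_inner_le_norm _ _
          _ ≤ ‖(ξ : H)‖ * (‖Acl‖ * ‖T ξ‖) :=
              mul_le_mul_of_nonneg_left (Acl.le_opNorm (T ξ)) (norm_nonneg _)
      rcases eq_or_lt_of_le (norm_nonneg (T ξ)) with h | h
      · rw [← h]
        positivity
      · nlinarith [h3, h]
    -- Step 5: D = ⊤
    have hDtop : D = ⊤ := by
      rw [Submodule.eq_top_iff']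
      intro x
      have hx : x ∈ closure (D : Set H) := by
        rw [hD.closure_eq]
        trivial
      obtain ⟨f, hfD, hfx⟩ := mem_closure_iff_seq_limit.mp hx
      set ξs : ℕ → ↥D := fun k => ⟨f k, hfD k⟩ with hξs
      have hcf : CauchySeq f := hfx.cauchySeq
      have hcg : CauchySeq (fun k => T (ξs k)) := by
        rw [Metric.cauchySeq_iff] at hcf ⊢
        intro ε hε
        have hc : (0 : ℝ) < ‖Acl‖ + 1 := by positivity
        obtain ⟨N, hN⟩ := hcf (ε / (‖Acl‖ + 1)) (by positivity)
        refine ⟨N, fun p hp q hq => ?_⟩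
        have h1 : dist (T (ξs p)) (T (ξs q)) = ‖T (ξs p - ξs q)‖ := by
          rw [dist_eq_norm, ← map_sub]
        have h2 : ‖T (ξs p - ξs q)‖ ≤ ‖Acl‖ * ‖((ξs p - ξs q : ↥D) : H)‖ := hTbdd _
        have h3 : ‖((ξs p - ξs q : ↥D) : H)‖ = dist (f p) (f q) := by
          rw [dist_eq_norm]
          rfl
        have h4 := hN p hp q hq
        have h5 : (0 : ℝ) ≤ dist (f p) (f q) := dist_nonneg
        have h6 : (0 : ℝ) ≤ ‖Acl‖ := norm_nonneg _
        rw [h1]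
        rw [h3] at h2
        calc ‖T (ξs p - ξs q)‖ ≤ ‖Acl‖ * dist (f p) (f q) := h2
          _ ≤ (‖Acl‖ + 1) * dist (f p) (f q) := by nlinarith
          _ < (‖Acl‖ + 1) * (ε / (‖Acl‖ + 1)) := by
              exact mul_lt_mul_of_pos_left h4 hc
          _ = ε := by field_simp
      obtain ⟨y, hy⟩ := cauchySeq_tendsto_of_complete hcg
      have hmemxy : (x, y) ∈ {p : H × H | ∃ ξ : ↥D, p.1 = (ξ : H) ∧ p.2 = T ξ} := by
        apply hclosed.mem_of_tendsto (hfx.prodMk_nhds hy)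
        exact Filter.Eventually.of_forall fun k => ⟨ξs k, rfl, rfl⟩
      obtain ⟨ξ₀, hξ₀, -⟩ := hmemxy
      rw [show x = (ξ₀ : H) from hξ₀]
      exact ξ₀.2
    exact ⟨hDtop, ‖Acl‖, hTbdd⟩
  · -- everywhere defined and bounded → solvable
    rintro ⟨hDtop, C, hC⟩
    have hC'0 : (0 : ℝ) ≤ max C 0 := le_max_right _ _
    set C' := max C 0 with hC'def
    have hTb : ∀ ξ : ↥D, ‖T ξ‖ ≤ C' * ‖(ξ : H)‖ := fun ξ =>
      (hC ξ).trans (mul_le_mul_of_nonneg_right (le_max_left _ _) (norm_nonneg _))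
    set K := Real.sqrt (1 + C' ^ 2) with hKdef
    have hK2 : K ^ 2 = 1 + C' ^ 2 := Real.sq_sqrt (by positivity)
    have hK0 : 0 ≤ K := Real.sqrt_nonneg _
    have hnK : ∀ ξ : ↥D, Real.sqrt (‖(ξ : H)‖ ^ 2 + ‖T ξ‖ ^ 2) ≤ K * ‖(ξ : H)‖ := by
      intro ξ
      have h2 : ‖T ξ‖ ^ 2 ≤ C' ^ 2 * ‖(ξ : H)‖ ^ 2 := by
        nlinarith [hTb ξ, norm_nonneg (T ξ), norm_nonneg ((ξ : H)), mul_nonneg hC'0 (norm_nonneg ((ξ : H)))]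
      have h3 : ‖(ξ : H)‖ ^ 2 + ‖T ξ‖ ^ 2 ≤ (K * ‖(ξ : H)‖) ^ 2 := by
        have : (K * ‖(ξ : H)‖) ^ 2 = (1 + C' ^ 2) * ‖(ξ : H)‖ ^ 2 := by
          rw [mul_pow, hK2]
        nlinarith [norm_nonneg ((ξ : H))]
      calc Real.sqrt (‖(ξ : H)‖ ^ 2 + ‖T ξ‖ ^ 2) ≤ Real.sqrt ((K * ‖(ξ : H)‖) ^ 2) :=
          Real.sqrt_le_sqrt h3
        _ = K * ‖(ξ : H)‖ := Real.sqrt_sq (mul_nonneg hK0 (norm_nonneg _))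
    have hmem : ∀ x : H, x ∈ D := fun x => by
      rw [hDtop]
      trivial
    let ι : H →ₗ[ℂ] ↥D :=
    { toFun := fun x => ⟨x, hmem x⟩
      map_add' := fun a b => rfl
      map_smul' := fun c a => rfl }
    have hι : ∀ ξ : ↥D, ι (↑ξ : H) = ξ := fun ξ => Subtype.ext rfl
    have hιcoe : ∀ x : H, ((ι x : ↥D) : H) = x := fun x => rfl
    constructor
    · -- q-closedness
      refine ⟨graph_isNormFn D T, ⟨⟨1, one_pos, fun ξ => ?_⟩, ?_⟩,
        graph_reflexive D T hclosed, 1, one_pos, fun ξ η => ?_⟩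
      · rw [one_mul]
        exact coe_le_graphNorm D T ξ
      · intro ξs hlim hcauchy
        apply squeeze_zero (fun k => Real.sqrt_nonneg _) (fun k => hnK (ξs k))
        simpa using hlim.const_mul K
      · rw [one_mul]
        calc ‖⟪(η : H), T ξ⟫_ℂ‖ ≤ ‖(η : H)‖ * ‖T ξ‖ := norm_inner_le_norm _ _
          _ ≤ Real.sqrt (‖(η : H)‖ ^ 2 + ‖T η‖ ^ 2) * Real.sqrt (‖(ξ : H)‖ ^ 2 + ‖T ξ‖ ^ 2) :=
              mul_le_mul (coe_le_graphNorm D T η) (T_le_graphNorm D T ξ) (norm_nonneg _)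
                (Real.sqrt_nonneg _)
          _ = Real.sqrt (‖(ξ : H)‖ ^ 2 + ‖T ξ‖ ^ 2) * Real.sqrt (‖(η : H)‖ ^ 2 + ‖T η‖ ^ 2) := by
              ring
    · -- the perturbation Υ
      refine ⟨fun x y => ⟪y, x - T (ι x)⟫_ℂ, ⟨⟨fun y => ⟨?_, ?_⟩, fun x => ⟨?_, ?_⟩⟩,
        1 + C', fun x y => ?_⟩, ?_, ?_⟩
      · intro a b
        simp only [map_add, inner_sub_right, inner_add_right]
        ring
      · intro c a
        simp only [map_smul, ← smul_sub, inner_smul_right, smul_eq_mul]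
      · intro a b
        simp only [inner_add_left, map_add]
      · intro c a
        simp only [inner_smul_left, map_mul, smul_eq_mul]
        simp [inner_sub_left]
      · -- boundedness of Υ
        have h1 : ‖x - T (ι x)‖ ≤ (1 + C') * ‖x‖ := by
          calc ‖x - T (ι x)‖ ≤ ‖x‖ + ‖T (ι x)‖ := norm_sub_le _ _
            _ ≤ ‖x‖ + C' * ‖x‖ := by
                have := hTb (ι x)
                rw [hιcoe x] at this
                linarith
            _ = (1 + C') * ‖x‖ := by ring
        calc ‖⟪y, x - T (ι x)⟫_ℂ‖ ≤ ‖y‖ * ‖x - T (ι x)‖ := norm_inner_le_norm _ _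
          _ ≤ ‖y‖ * ((1 + C') * ‖x‖) := by
              exact mul_le_mul_of_nonneg_left h1 (norm_nonneg _)
          _ = (1 + C') * ‖x‖ * ‖y‖ := by ring
      · -- trivial kernel
        intro ξ hξ
        have h := hξ ξ
        simp only at h
        rw [hι ξ, inner_sub_right] at h
        have hz : ⟪(ξ : H), (ξ : H)⟫_ℂ = 0 := by
          linear_combination h
        exact Subtype.ext (by simpa using inner_self_eq_zero.mp hz)
      · -- representation
        rintro Λ ⟨hadd, hsmul, CΛ, hΛ⟩
        let f : H →ₗ[ℂ] ℂ :=
        { toFun := fun x => (starRingEnd ℂ) (Λ (ι x))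
          map_add' := by
            intro a b
            show (starRingEnd ℂ) (Λ (ι (a + b))) = (starRingEnd ℂ) (Λ (ι a)) + (starRingEnd ℂ) (Λ (ι b))
            rw [map_add, hadd, map_add]
          map_smul' := by
            intro c a
            show (starRingEnd ℂ) (Λ (ι (c • a))) = (RingHom.id ℂ) c • (starRingEnd ℂ) (Λ (ι a))
            rw [map_smul, hsmul, map_mul]
            simp }
        have hfb : ∀ x : H, ‖f x‖ ≤ (max CΛ 0 * K) * ‖x‖ := by
          intro x
          have h1 : ‖f x‖ = ‖Λ (ι x)‖ := RCLike.norm_conj _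
          have h2 := hΛ (ι x)
          have h3 := hnK (ι x)
          rw [hιcoe x] at h3
          have h4 : ‖Λ (ι x)‖ ≤ max CΛ 0 * Real.sqrt (‖((ι x : ↥D) : H)‖ ^ 2 + ‖T (ι x)‖ ^ 2) :=
            h2.trans (mul_le_mul_of_nonneg_right (le_max_left _ _) (Real.sqrt_nonneg _))
          rw [hιcoe x] at h4
          rw [h1]
          calc ‖Λ (ι x)‖ ≤ max CΛ 0 * Real.sqrt (‖x‖ ^ 2 + ‖T (ι x)‖ ^ 2) := h4
            _ ≤ max CΛ 0 * (K * ‖x‖) :=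
                mul_le_mul_of_nonneg_left h3 (le_max_right _ _)
            _ = (max CΛ 0 * K) * ‖x‖ := by ring
        set u := (InnerProductSpace.toDual ℂ H).symm (f.mkContinuous (max CΛ 0 * K) hfb) with hu
        have hu1 : ∀ z : H, ⟪u, z⟫_ℂ = (starRingEnd ℂ) (Λ (ι z)) := by
          intro z
          rw [hu]
          exact InnerProductSpace.toDual_symm_apply
        refine ⟨ι u, fun η => ?_⟩
        show Λ η = ⟪(η : H), T (ι u)⟫_ℂ + ⟪(η : H), ((ι u : ↥D) : H) - T (ι ((ι u : ↥D) : H))⟫_ℂ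
        rw [hιcoe u]
        rw [inner_sub_right]
        have : ⟪(η : H), T (ι u)⟫_ℂ + (⟪(η : H), u⟫_ℂ - ⟪(η : H), T (ι u)⟫_ℂ) = ⟪(η : H), u⟫_ℂ := by
          ring
        rw [this, ← inner_conj_symm, hu1 (η : H), hι η]
        simp

end Paper
end
end

section
/- Let Ω be a q-closed sesquilinear form on D with respect to a norm ‖·‖_Ω. If there exists a bounded sesquilinear form Υ on H such that Ω+Υ is coercive on D[‖·‖_Ω], i.e., |(Ω+Υ)(ξ,ξ)| ≥ γ‖ξ‖_Ω² for all ξ ∈ D and some γ > 0, then Υ ∈ P₀(Ω) and Ω is solvable with respect to ‖·‖_Ω. -/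
noncomputable section

open Filter Topology Function
open scoped InnerProductSpace

namespace Paper

open scoped ComplexConjugate

set_option maxHeartbeats 1000000

/-- Hahn–Banach: a closed submodule with trivial annihilator is the whole space. -/
lemma aux_eq_top {F : Type*} [NormedAddCommGroup F] [NormedSpace ℂ F]
    (S : Submodule ℂ F) (hc : IsClosed (S : Set F))
    (h : ∀ φ : F →L[ℂ] ℂ, (∀ x ∈ S, φ x = 0) → φ = 0) : S = ⊤ := by
  by_contra hne
  obtain ⟨x, hx⟩ : ∃ x, x ∉ S := by
    by_contra hx; push_neg at hx
    exact hne (Submodule.eq_top_iff'.2 hx)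
  haveI : IsClosed (S : Set F) := hc
  have hmk : (Submodule.Quotient.mk x : F ⧸ S) ≠ 0 := by
    simpa [Submodule.Quotient.mk_eq_zero] using hx
  obtain ⟨g, hg1, hg2⟩ := exists_dual_vector ℂ _ (norm_ne_zero_iff.mpr hmk)
  have hmkQcont : ∀ m : F, ‖(Submodule.Quotient.mk m : F ⧸ S)‖ ≤ 1 * ‖m‖ := by
    intro m
    simpa using Submodule.Quotient.norm_mk_le S m
  let mkQ : F →L[ℂ] (F ⧸ S) := LinearMap.mkContinuous S.mkQ 1 hmkQcont
  have : g.comp mkQ = 0 := by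
    apply h
    intro y hy
    have : (Submodule.Quotient.mk y : F ⧸ S) = 0 := (Submodule.Quotient.mk_eq_zero S).2 hy
    change g (Submodule.Quotient.mk y) = 0
    simp [mkQ, ContinuousLinearMap.comp_apply, LinearMap.mkContinuous_apply,
      Submodule.mkQ_apply, this]
  have h0 : g (Submodule.Quotient.mk x) = 0 := by
    have := congrArg (fun φ => φ x) this
    exact (this : g (Submodule.Quotient.mk x) = (0 : F →L[ℂ] ℂ) x).trans (ContinuousLinearMap.zero_apply x)
  rw [hg2] at h0
  have : ‖(Submodule.Quotient.mk x : F ⧸ S)‖ = 0 := Complex.ofReal_eq_zero.mp h0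
  exact hmk (norm_eq_zero.mp this)

/-- Lax–Milgram for a coercive conjugate-linear map into the dual of a
reflexive complex Banach space. -/
lemma aux_lax_milgram {E : Type*} [NormedAddCommGroup E] [NormedSpace ℂ E] [CompleteSpace E]
    (hrefl : Surjective (NormedSpace.inclusionInDoubleDual ℂ E))
    (T : E →SL[starRingEnd ℂ] (StrongDual ℂ E))
    {γ : ℝ} (hγ : 0 < γ) (hco : ∀ x : E, γ * ‖x‖ ^ 2 ≤ ‖T x x‖) :
    Surjective T := by
  have hlow : ∀ x : E, γ * ‖x‖ ≤ ‖T x‖ := by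
    intro x
    rcases eq_or_ne x 0 with rfl | hx
    · simp
    · have h1 : γ * ‖x‖ ^ 2 ≤ ‖T x‖ * ‖x‖ := (hco x).trans ((T x).le_opNorm x)
      have hxpos : (0:ℝ) < ‖x‖ := norm_pos_iff.mpr hx
      nlinarith
  have hanti : AntilipschitzWith (⟨γ, hγ.le⟩ : NNReal)⁻¹ T := by
    apply ContinuousLinearMap.antilipschitz_of_bound
    intro x
    have h1 := hlow x
    show ‖x‖ ≤ (((⟨γ, hγ.le⟩ : NNReal)⁻¹ : NNReal) : ℝ) * ‖T x‖
    change ‖x‖ ≤ γ⁻¹ * ‖T x‖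
    rw [inv_mul_eq_div, le_div_iff₀ hγ]
    linarith
  have hclosed : IsClosed
      ((LinearMap.range (T : E →ₛₗ[starRingEnd ℂ] StrongDual ℂ E) : Submodule ℂ (StrongDual ℂ E)) : Set (StrongDual ℂ E)) := by
    have := hanti.isClosed_range T.uniformContinuous
    simpa [Set.range, LinearMap.coe_range] using this
  have hrange : LinearMap.range (T : E →ₛₗ[starRingEnd ℂ] StrongDual ℂ E) = ⊤ := by
    apply aux_eq_top _ hclosed
    intro φ hφ
    obtain ⟨x, hxφ⟩ := hrefl φ
    have hx0 : x = 0 := by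
      have : φ (T x) = 0 := hφ (T x) (LinearMap.mem_range.mpr ⟨x, rfl⟩)
      rw [← hxφ] at this
      rw [NormedSpace.dual_def] at this
      have h2 := hco x
      rw [this, norm_zero] at h2
      have : ‖x‖ ^ 2 ≤ 0 := by nlinarith
      have : ‖x‖ = 0 := by nlinarith [norm_nonneg x, sq_nonneg ‖x‖]
      exact norm_eq_zero.mp this
    rw [← hxφ, hx0]
    simp
  intro f
  have : f ∈ LinearMap.range (T : E →ₛₗ[starRingEnd ℂ] StrongDual ℂ E) := hrange ▸ Submodule.mem_top
  exact this


theorem solvable_of_coercive {H : Type} [NormedAddCommGroup H] [InnerProductSpace ℂ H]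
    [CompleteSpace H] (D : Submodule ℂ H) (hD : Dense (D : Set H))
    (Ω : ↥D → ↥D → ℂ) (hsesq : IsSesq Ω) (n : ↥D → ℝ) (hq : IsQClosed D Ω n)
    (Υ : H → H → ℂ) (hΥ : IsBoundedForm Υ)
    (hcoer : ∃ γ : ℝ, 0 < γ ∧ ∀ ξ : ↥D, γ * n ξ ^ 2 ≤ ‖Ω ξ ξ + Υ ↑ξ ↑ξ‖) :
    InP0 D Ω n Υ ∧ IsSolvable D Ω n := by
  obtain ⟨γ, hγ, hco⟩ := hcoer
  have hnorm := hq.1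
  obtain ⟨α, hα, hemb⟩ := hq.2.1.1
  obtain ⟨M, hMsurj⟩ := hq.2.2.1
  obtain ⟨β, hβ, hbd⟩ := hq.2.2.2
  have hΥsesq := hΥ.1
  obtain ⟨C, hC⟩ := hΥ.2
  -- basic facts about the norm `n`
  have hn0 : n 0 = 0 := (hnorm.1 0).2 rfl
  have hnneg : ∀ ξ : ↥D, 0 ≤ n ξ := by
    intro ξ
    have h1 := hnorm.2.2 ξ (-ξ)
    have h2 : n (-ξ) = n ξ := by
      have := hnorm.2.1 (-1) ξ
      simpa using this
    rw [add_neg_cancel, hn0, h2] at h1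
    linarith
  letI := M.instGroup
  letI := M.instSpace
  letI := M.instComplete
  have hjinj : Function.Injective M.j := by
    intro a b hab
    have h1 : n (a - b) = 0 := by
      rw [← M.isometry, map_sub, hab, sub_self, norm_zero]
    exact sub_eq_zero.mp ((hnorm.1 _).1 h1)
  set e : ↥D ≃ₗ[ℂ] M.E := LinearEquiv.ofBijective M.j ⟨hjinj, hMsurj⟩ with he
  have hecoe : ∀ ξ : ↥D, e ξ = M.j ξ := fun ξ => rfl
  have hesymm : ∀ x : M.E, n (e.symm x) = ‖x‖ := by
    intro x
    rw [← M.isometry, ← hecoe, e.apply_symm_apply]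
  -- the combined form and its bound
  set B : ↥D → ↥D → ℂ := fun ξ η => Ω ξ η + Υ ↑ξ ↑η with hBdef
  set K : ℝ := β + α ^ 2 * max C 0 with hKdef
  have hK : 0 < K := by
    have : 0 ≤ α ^ 2 * max C 0 := mul_nonneg (sq_nonneg α) (le_max_right C 0)
    dsimp [K]; linarith
  have hKb : ∀ ξ η : ↥D, ‖B ξ η‖ ≤ K * n ξ * n η := by
    intro ξ η
    have h1 : ‖B ξ η‖ ≤ ‖Ω ξ η‖ + ‖Υ ↑ξ ↑η‖ := norm_add_le _ _
    have h2 := hbd ξ η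
    have h3 := hC (↑ξ : H) (↑η : H)
    have h4 : ‖Υ ↑ξ ↑η‖ ≤ max C 0 * ‖(↑ξ : H)‖ * ‖(↑η : H)‖ := by
      refine h3.trans ?_
      have := mul_nonneg (norm_nonneg ((↑ξ : H))) (norm_nonneg ((↑η : H)))
      nlinarith [le_max_left C 0]
    have h5 := hemb ξ
    have h6 := hemb η
    have h7 : max C 0 * ‖(↑ξ : H)‖ * ‖(↑η : H)‖ ≤ max C 0 * (α * n ξ) * (α * n η) := by
      have hm : (0:ℝ) ≤ max C 0 := le_max_right C 0
      have hp : ‖(↑ξ : H)‖ * ‖(↑η : H)‖ ≤ (α * n ξ) * (α * n η) :=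
        mul_le_mul h5 h6 (norm_nonneg _) ((norm_nonneg _).trans h5)
      calc max C 0 * ‖(↑ξ : H)‖ * ‖(↑η : H)‖ = max C 0 * (‖(↑ξ : H)‖ * ‖(↑η : H)‖) := by ring
        _ ≤ max C 0 * ((α * n ξ) * (α * n η)) := mul_le_mul_of_nonneg_left hp hm
        _ = max C 0 * (α * n ξ) * (α * n η) := by ring
    have h8 : max C 0 * (α * n ξ) * (α * n η) = α ^ 2 * max C 0 * n ξ * n η := by ring
    have hKexp : K * n ξ * n η = β * n ξ * n η + α ^ 2 * max C 0 * n ξ * n η := by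
      rw [hKdef]; ring
    linarith
  -- sesquilinearity of B
  have hlin1 : ∀ η : ↥D, IsLinearMap ℂ fun ξ : ↥D => B ξ η := by
    intro η
    have h1 := hsesq.1 η
    have h2 := hΥsesq.1 (↑η : H)
    constructor
    · intro a b
      show Ω (a + b) η + Υ ↑(a + b) ↑η = (Ω a η + Υ ↑a ↑η) + (Ω b η + Υ ↑b ↑η)
      rw [h1.map_add, Submodule.coe_add, h2.map_add]; ring
    · intro c a
      show Ω (c • a) η + Υ ↑(c • a) ↑η = c • (Ω a η + Υ ↑a ↑η)
      rw [h1.map_smul, Submodule.coe_smul, h2.map_smul]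
      simp [smul_eq_mul]; ring
  have hlin2 : ∀ ξ : ↥D, IsLinearMap ℂ fun η : ↥D => conj (B ξ η) := by
    intro ξ
    have h1 := hsesq.2 ξ
    have h2 := hΥsesq.2 (↑ξ : H)
    constructor
    · intro a b
      show conj (Ω ξ (a + b) + Υ ↑ξ ↑(a + b)) = conj (Ω ξ a + Υ ↑ξ ↑a) + conj (Ω ξ b + Υ ↑ξ ↑b)
      rw [map_add, map_add, map_add, h1.map_add, Submodule.coe_add, h2.map_add]
      ring
    · intro c a
      show conj (Ω ξ (c • a) + Υ ↑ξ ↑(c • a)) = c • conj (Ω ξ a + Υ ↑ξ ↑a)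
      rw [map_add, h1.map_smul, Submodule.coe_smul, h2.map_smul, map_add]
      simp [smul_eq_mul]; ring
  -- the conjugate-linear operator T : E → E*
  set Lmap : M.E → (M.E →ₗ[ℂ] ℂ) := fun x =>
    { toFun := fun y => conj (B (e.symm x) (e.symm y))
      map_add' := by
        intro a b
        show conj (B (e.symm x) (e.symm (a + b)))
            = conj (B (e.symm x) (e.symm a)) + conj (B (e.symm x) (e.symm b))
        rw [e.symm.map_add]
        exact (hlin2 (e.symm x)).map_add _ _
      map_smul' := by
        intro c a
        show conj (B (e.symm x) (e.symm (c • a))) = c • conj (B (e.symm x) (e.symm a))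
        rw [e.symm.map_smul]
        exact (hlin2 (e.symm x)).map_smul c _ } with hLmap
  have hLbound : ∀ x y : M.E, ‖Lmap x y‖ ≤ K * ‖x‖ * ‖y‖ := by
    intro x y
    show ‖conj (B (e.symm x) (e.symm y))‖ ≤ K * ‖x‖ * ‖y‖
    rw [RCLike.norm_conj]
    calc ‖B (e.symm x) (e.symm y)‖ ≤ K * n (e.symm x) * n (e.symm y) := hKb _ _
      _ = K * ‖x‖ * ‖y‖ := by rw [hesymm, hesymm]
  set Tfun : M.E → StrongDual ℂ M.E := fun x =>
    LinearMap.mkContinuous (Lmap x) (K * ‖x‖) (fun y => hLbound x y) with hTfun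
  have hTfun_apply : ∀ x y : M.E, Tfun x y = conj (B (e.symm x) (e.symm y)) := by
    intro x y; rfl
  set T0 : M.E →ₛₗ[starRingEnd ℂ] StrongDual ℂ M.E :=
    { toFun := Tfun
      map_add' := by
        intro a b
        ext y
        rw [ContinuousLinearMap.add_apply, hTfun_apply, hTfun_apply, hTfun_apply,
          e.symm.map_add, (hlin1 (e.symm y)).map_add, map_add]
      map_smul' := by
        intro c a
        ext y
        rw [ContinuousLinearMap.smul_apply, hTfun_apply, hTfun_apply,
          e.symm.map_smul, (hlin1 (e.symm y)).map_smul]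
        simp [smul_eq_mul] } with hT0
  set T : M.E →SL[starRingEnd ℂ] StrongDual ℂ M.E :=
    LinearMap.mkContinuous T0 K (by
      intro x
      refine ContinuousLinearMap.opNorm_le_bound _ (by positivity) ?_
      intro y
      show ‖Tfun x y‖ ≤ K * ‖x‖ * ‖y‖
      rw [hTfun_apply]
      exact hLbound x y) with hT
  have hT_apply : ∀ x y : M.E, T x y = conj (B (e.symm x) (e.symm y)) := by
    intro x y; rfl
  -- coercivity of T
  have hTco : ∀ x : M.E, γ * ‖x‖ ^ 2 ≤ ‖T x x‖ := by
    intro x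
    rw [hT_apply, RCLike.norm_conj, ← hesymm x]
    exact hco (e.symm x)
  have hTsurj : Surjective T := aux_lax_milgram M.reflexive T hγ hTco
  -- `InP0`: injectivity part
  have hinj : ∀ ξ : ↥D, (∀ η : ↥D, Ω ξ η + Υ ↑ξ ↑η = 0) → ξ = 0 := by
    intro ξ hξ
    have h1 := hco ξ
    rw [hξ ξ, norm_zero] at h1
    have h3 : n ξ = 0 := by
      rcases (hnneg ξ).eq_or_lt with h | h
      · exact h.symm
      · exfalso
        have : 0 < γ * n ξ ^ 2 := mul_pos hγ (pow_pos h 2)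
        linarith
    exact (hnorm.1 ξ).1 h3
  -- `InP0`: representation part
  have hrep : ∀ Λ : ↥D → ℂ, MemConjDual D n Λ → ∃ ξ : ↥D, ∀ η : ↥D, Λ η = Ω ξ η + Υ ↑ξ ↑η := by
    intro Λ hΛ
    obtain ⟨hadd, hsmul, Cl, hCl⟩ := hΛ
    set F : M.E →ₗ[ℂ] ℂ :=
      { toFun := fun y => conj (Λ (e.symm y))
        map_add' := by
          intro a b
          show conj (Λ (e.symm (a + b))) = conj (Λ (e.symm a)) + conj (Λ (e.symm b))
          rw [e.symm.map_add, hadd, map_add]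
        map_smul' := by
          intro c a
          show conj (Λ (e.symm (c • a))) = (RingHom.id ℂ) c • conj (Λ (e.symm a))
          rw [e.symm.map_smul, hsmul]
          simp [smul_eq_mul] } with hF
    have hFbound : ∀ y : M.E, ‖F y‖ ≤ Cl * ‖y‖ := by
      intro y
      show ‖conj (Λ (e.symm y))‖ ≤ Cl * ‖y‖
      rw [RCLike.norm_conj, ← hesymm y]
      exact hCl (e.symm y)
    set f : StrongDual ℂ M.E := LinearMap.mkContinuous F Cl hFbound with hf
    obtain ⟨x₀, hx₀⟩ := hTsurj f
    refine ⟨e.symm x₀, fun η => ?_⟩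
    have h1 : T x₀ (e η) = f (e η) := by rw [hx₀]
    rw [hT_apply] at h1
    have h2 : f (e η) = conj (Λ (e.symm (e η))) := rfl
    rw [h2, e.symm_apply_apply] at h1
    exact (star_injective h1).symm
  exact ⟨⟨hinj, hrep⟩, hq, Υ, hΥ, hinj, hrep⟩


end Paper
end
end
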